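/- Let G be a connected multigraph and f a divisor on G. Then f is winnable if and only if the divisor d_G − 1 − f, whose value at each vertex v is d_G(v) − 1 − f(v), is a halting divisor. -/

import Mathlib

variable {V : Type*} [Fintype V] [DecidableEq V]

/-- The degree of vertex `v` in the multigraph with edge-multiplicity function `m`. -/
def mgDeg (m : V → V → ℕ) (v : V) : ℕ := ∑ u, m v u

/-- The divisor obtained from `f` by firing vertex `v`. -/
def mgFire (m : V → V → ℕ) (f : V → ℤ) (v : V) : V → ℤ :=
  fun u => if u = v then f v - mgDeg m v else f u + m v u

/-- The divisor obtained from `f` by firing the vertices of `L` in order. -/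
def mgPlay (m : V → V → ℕ) (f : V → ℤ) (L : List V) : V → ℤ :=
  L.foldl (mgFire m) f

/-- `L` is a legal game from `f`: each fired vertex is active when fired. -/
def mgLegal (m : V → V → ℕ) : (V → ℤ) → List V → Prop
  | _, [] => True
  | f, v :: L => ((mgDeg m v : ℤ) ≤ f v) ∧ mgLegal m (mgFire m f v) L

/-- A divisor is stable if no vertex is active. -/
def mgStable (m : V → V → ℕ) (f : V → ℤ) : Prop := ∀ v, f v < (mgDeg m v : ℤ)

/-- A divisor is halting if some legal game from it ends at a stable divisor. -/
def mgHalting (m : V → V → ℕ) (f : V → ℤ) : Prop :=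
  ∃ L : List V, mgLegal m f L ∧ mgStable m (mgPlay m f L)

/-- A divisor is recurrent if some non-empty legal game from it leads back to it. -/
def mgRecurrent (m : V → V → ℕ) (f : V → ℤ) : Prop :=
  ∃ L : List V, L ≠ [] ∧ mgLegal m f L ∧ mgPlay m f L = f

/-- A divisor is effective if it is nonnegative everywhere. -/
def mgEffective (f : V → ℤ) : Prop := ∀ v, 0 ≤ f v

/-- The degree of a divisor. -/
def mgDegDiv (f : V → ℤ) : ℤ := ∑ v, f v

/-- Distance of a divisor from a recurrent state. -/
noncomputable def mgDistRec (m : V → V → ℕ) (f : V → ℤ) : ℕ :=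
  sInf {n : ℕ | ∃ g : V → ℤ, mgEffective g ∧ mgDegDiv g = (n : ℤ) ∧ mgRecurrent m (f + g)}

/-- Distance of a divisor from a non-halting state. -/
noncomputable def mgDistNonhalt (m : V → V → ℕ) (f : V → ℤ) : ℕ :=
  sInf {n : ℕ | ∃ g : V → ℤ, mgEffective g ∧ mgDegDiv g = (n : ℤ) ∧ ¬ mgHalting m (f + g)}

/-- A multigraph is connected if any two vertices are joined by a path of
positive-multiplicity edges. -/
def mgConnected (m : V → V → ℕ) : Prop :=
  ∀ u v : V, Relation.ReflTransGen (fun a b => 0 < m a b) u v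

/-- `f` and `g` are linearly equivalent: `f` can be transformed to `g` by firings. -/
def mgLinEquiv (m : V → V → ℕ) (f g : V → ℤ) : Prop :=
  ∃ L : List V, mgPlay m f L = g

/-- A divisor is winnable if it is linearly equivalent to an effective divisor. -/
def mgWinnable (m : V → V → ℕ) (f : V → ℤ) : Prop :=
  ∃ g : V → ℤ, mgEffective g ∧ mgLinEquiv m f g

/-- The rank of a divisor. -/
noncomputable def mgRank (m : V → V → ℕ) (f : V → ℤ) : ℤ :=
  ((sInf {n : ℕ | ∃ g : V → ℤ, mgEffective g ∧ mgDegDiv g = (n : ℤ) ∧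
    ¬ mgWinnable m (f - g)} : ℕ) : ℤ) - 1


/-- result of firing vertex `u` exactly `x u` times (as a formula). -/
def mgS (m : V → V → ℕ) (f : V → ℤ) (x : V → ℤ) (v : V) : ℤ :=
  f v + ∑ u, x u * m u v - x v * mgDeg m v

lemma mgFire_eq (m : V → V → ℕ) (hloop : ∀ v, m v v = 0) (f : V → ℤ) (a v : V) :
    mgFire m f a v = f v + m a v - (if v = a then (mgDeg m a : ℤ) else 0) := by
  unfold mgFire
  by_cases h : v = a <;> simp [h, hloop]

lemma mgPlay_eq (m : V → V → ℕ) (hloop : ∀ v, m v v = 0) (L : List V) :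
    ∀ f v, mgPlay m f L v = mgS m f (fun u => (L.count u : ℤ)) v := by
  induction L with
  | nil => intro f v; simp [mgPlay, mgS]
  | cons a L ih =>
    intro f v
    have : mgPlay m f (a :: L) v = mgPlay m (mgFire m f a) L v := rfl
    rw [this, ih]
    unfold mgS
    rw [mgFire_eq m hloop]
    have hc : ∀ u, (((a :: L).count u : ℤ)) = (L.count u : ℤ) + (if u = a then 1 else 0) := by
      intro u
      by_cases h : u = a <;> simp [h, List.count_cons] <;> exact Ne.symm h
    simp only [hc, add_mul, Finset.sum_add_distrib, ite_mul, one_mul, zero_mul,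
      Finset.sum_ite_eq', Finset.mem_univ, if_true]
    by_cases h : v = a <;> simp [h] <;> ring

lemma mgS_shift (m : V → V → ℕ) (hsymm : ∀ u v, m u v = m v u) (f : V → ℤ)
    (x : V → ℤ) (k : ℤ) (v : V) :
    mgS m f (fun u => x u + k) v = mgS m f x v := by
  unfold mgS
  have hd : ∑ u, (m u v : ℤ) = (mgDeg m v : ℤ) := by
    unfold mgDeg
    push_cast
    exact Finset.sum_congr rfl (fun u _ => by rw [hsymm])
  simp only [add_mul, Finset.sum_add_distrib, ← Finset.mul_sum, hd]
  ring

lemma exists_list_count (c : V → ℕ) : ∃ L : List V, ∀ v, L.count v = c v := by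
  classical
  refine ⟨Finset.univ.toList.flatMap (fun u => List.replicate (c u) u), fun v => ?_⟩
  rw [List.count_flatMap]
  have : ∀ u, (List.count v ∘ fun u => List.replicate (c u) u) u
      = if u = v then c u else 0 := by
    intro u; simp [List.count_replicate]
  rw [List.map_congr_left (fun u _ => this u)]
  have h1 : (List.map (fun u => if u = v then c u else 0) Finset.univ.toList).sum
      = ∑ u, (if u = v then c u else 0) := by
    rw [Finset.sum, ← Multiset.coe_toList Finset.univ.val, Multiset.map_coe,
      Multiset.sum_coe]
    rfl
  rw [h1]
  simp

lemma mgS_fire (m : V → V → ℕ) (hloop : ∀ v, m v v = 0) (f : V → ℤ) (a : V)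
    (x : V → ℤ) (w : V) :
    mgS m (mgFire m f a) x w = mgS m f (fun u => x u + if u = a then 1 else 0) w := by
  unfold mgS
  rw [mgFire_eq m hloop]
  simp only [add_mul, Finset.sum_add_distrib, ite_mul, one_mul, zero_mul,
    Finset.sum_ite_eq', Finset.mem_univ, if_true]
  by_cases h : w = a <;> simp [h] <;> ring

lemma mgStab (m : V → V → ℕ) (hloop : ∀ v, m v v = 0) :
    ∀ (n : ℕ) (f : V → ℤ) (x : V → ℕ), (∑ v, x v = n) →
      (∀ v, mgS m f (fun u => (x u : ℤ)) v < (mgDeg m v : ℤ)) → mgHalting m f := by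
  intro n
  induction n using Nat.strong_induction_on with
  | _ n ih =>
    intro f x hsum hx
    by_cases hst : mgStable m f
    · exact ⟨[], trivial, hst⟩
    · unfold mgStable at hst
      push_neg at hst
      obtain ⟨v, hv⟩ := hst
      have hxv : 1 ≤ x v := by
        by_contra h
        push_neg at h
        interval_cases hxv : x v
        have h3 := hx v
        simp only [mgS, hxv, Nat.cast_zero, zero_mul, sub_zero] at h3
        have hnn : (0:ℤ) ≤ ∑ u, (x u : ℤ) * m u v := by positivity
        omega
      set x' : V → ℕ := Function.update x v (x v - 1) with hx'
      have hkey : ∀ w, mgS m (mgFire m f v) (fun u => (x' u : ℤ)) w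
          = mgS m f (fun u => (x u : ℤ)) w := by
        intro w
        rw [mgS_fire m hloop]
        congr 1
        funext u
        by_cases h : u = v <;> simp [h, hx', Function.update] <;> omega
      have hsum' : ∑ u, x' u = n - 1 := by
        have h2 : x v + ∑ u ∈ Finset.univ.erase v, x u = n := by
          rw [Finset.add_sum_erase _ _ (Finset.mem_univ v)]; exact hsum
        rw [hx', Finset.sum_update_of_mem (Finset.mem_univ v), ← Finset.erase_eq]
        omega
      have hn : 1 ≤ n := by
        have : x v ≤ ∑ u, x u := Finset.single_le_sum (fun u _ => Nat.zero_le _)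
          (Finset.mem_univ v)
        omega
      obtain ⟨L, hL, hLs⟩ := ih (n-1) (by omega) (mgFire m f v) x' hsum'
        (fun w => (hkey w) ▸ hx w)
      exact ⟨v :: L, ⟨hv, hL⟩, hLs⟩

lemma mgS_neg_eq (m : V → V → ℕ) (f g : V → ℤ) (c : V → ℕ) (v : V) :
    mgS m g (fun u => -(c u : ℤ)) v = g v - (mgS m f (fun u => (c u : ℤ)) v - f v) := by
  simp only [mgS, neg_mul, Finset.sum_neg_distrib]
  ring

lemma cast_sub_sup (c : V → ℕ) :
    (fun u => ((Finset.univ.sup c - c u : ℕ) : ℤ))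
      = fun u => -(c u : ℤ) + (Finset.univ.sup c : ℕ) := by
  funext u
  have := Finset.le_sup (f := c) (Finset.mem_univ u)
  omega

/-- A divisor `f` on a connected multigraph is winnable if and only if
`d_G - 1 - f` is a halting divisor. -/
theorem stmt1 [Nonempty V] (m : V → V → ℕ) (hsymm : ∀ u v, m u v = m v u)
    (hloop : ∀ v, m v v = 0) (hconn : mgConnected m) (f : V → ℤ) :
    mgWinnable m f ↔ mgHalting m (fun v => (mgDeg m v : ℤ) - 1 - f v) := by
  constructor
  · rintro ⟨e, he, L, hL⟩
    apply mgStab m hloop (∑ v, (Finset.univ.sup (fun u => L.count u) - L.count v))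
      _ _ rfl
    intro v
    rw [cast_sub_sup (fun u => L.count u), mgS_shift m hsymm,
      mgS_neg_eq m f _ (fun u => L.count u) v, ← mgPlay_eq m hloop L f v, hL]
    have := he v
    beta_reduce
    linarith
  · rintro ⟨L, -, hstab⟩
    refine ⟨fun v => (mgDeg m v : ℤ) - 1 - mgPlay m (fun v => (mgDeg m v : ℤ) - 1 - f v) L v,
      fun v => by have := hstab v; beta_reduce; linarith, ?_⟩
    obtain ⟨L', hL'⟩ := exists_list_count
      (fun v => Finset.univ.sup (fun u => L.count u) - L.count v)
    refine ⟨L', ?_⟩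
    funext v
    rw [mgPlay_eq m hloop L' f v]
    have hcnt : (fun u => ((L'.count u : ℕ) : ℤ))
        = fun u => ((Finset.univ.sup (fun u => L.count u) - L.count u : ℕ) : ℤ) := by
      funext u; rw [hL' u]
    rw [hcnt, cast_sub_sup (fun u => L.count u), mgS_shift m hsymm,
      mgS_neg_eq m (fun v => (mgDeg m v : ℤ) - 1 - f v) f (fun u => L.count u) v,
      ← mgPlay_eq m hloop L _ v]
    ring
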